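/- arXiv:1208.0353 — 2 statements merged into one kernel-verified Lean document; each statement's English description precedes it below -/
import Mathlib

section
/- Let P_B : ℂ^n → ℂ^n be the orthogonal projection onto a subspace R(D_B) spanned by the columns of D indexed by B with |B| ≤ k. If A satisfies the D-RIP of order k with constant δ_k (i.e., (1−δ_k)‖Dα‖² ≤ ‖ADα‖² ≤ (1+δ_k)‖Dα‖² for all k-sparse α), then for every z ∈ ℂ^n, ‖P_B A* A P_B z − P_B z‖ ≤ δ_k ‖z‖. -/
noncomputable section

abbrev Vec (n : ℕ) := EuclideanSpace ℂ (Fin n)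

/-- Span of the columns of `D` indexed by `B`. -/
def colSpan {n d : ℕ} (D : Vec d →L[ℂ] Vec n) (B : Finset (Fin d)) : Submodule ℂ (Vec n) :=
  Submodule.span ℂ ((fun j => D (EuclideanSpace.single j 1)) '' (B : Set (Fin d)))

/-- Orthogonal projection onto the span of the columns of `D` indexed by `B`. -/
def P {n d : ℕ} (D : Vec d →L[ℂ] Vec n) (B : Finset (Fin d)) (z : Vec n) : Vec n :=
  ((colSpan D B).orthogonalProjectionOnto z : Vec n)

open Classical in
/-- `α` has at most `k` nonzero entries. -/
def sparse {d : ℕ} (k : ℕ) (α : Vec d) : Prop :=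
  (Finset.univ.filter fun i => α i ≠ 0).card ≤ k

/-- `A` satisfies the `D`-RIP of order `k` with constant `δ`. -/
def DRIP {m n d : ℕ} (A : Vec n →L[ℂ] Vec m) (D : Vec d →L[ℂ] Vec n) (k : ℕ) (δ : ℝ) : Prop :=
  ∀ α : Vec d, sparse k α →
    Real.sqrt (1 - δ) * ‖D α‖ ≤ ‖A (D α)‖ ∧ ‖A (D α)‖ ≤ Real.sqrt (1 + δ) * ‖D α‖

open scoped InnerProductSpace

set_option maxHeartbeats 1000000

lemma colSpan_rep {n d : ℕ} (D : Vec d →L[ℂ] Vec n) (B : Finset (Fin d))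
    {y : Vec n} (hy : y ∈ colSpan D B) :
    ∃ α : Vec d, (∀ i ∉ B, α i = 0) ∧ D α = y := by
  have h : colSpan D B = Submodule.map (D : Vec d →ₗ[ℂ] Vec n)
      (Submodule.span ℂ ((fun j => (EuclideanSpace.single j 1 : Vec d)) '' (B : Set (Fin d)))) := by
    unfold colSpan
    rw [← Submodule.span_image, Set.image_image]
    rfl
  rw [h] at hy
  obtain ⟨α, hα, rfl⟩ := hy
  refine ⟨α, ?_, rfl⟩
  intro i hi
  induction hα using Submodule.span_induction with
  | mem v hv =>
      obtain ⟨j, hj, rfl⟩ := hv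
      have hij : i ≠ j := fun h => hi (h ▸ hj)
      simp [EuclideanSpace.single_apply, hij]
  | zero => rfl
  | add u v hu hv ihu ihv => simp_all [PiLp.add_apply]
  | smul c u hu ih => simp_all [PiLp.smul_apply]

theorem stmt0 {m n d k : ℕ} (A : Vec n →L[ℂ] Vec m) (D : Vec d →L[ℂ] Vec n)
    (δ : ℝ) (hδ0 : 0 < δ) (hδ1 : δ < 1)
    (hA : ∀ α : Vec d, sparse k α →
      (1 - δ) * ‖D α‖ ^ 2 ≤ ‖A (D α)‖ ^ 2 ∧ ‖A (D α)‖ ^ 2 ≤ (1 + δ) * ‖D α‖ ^ 2)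
    (B : Finset (Fin d)) (hB : B.card ≤ k) (z : Vec n) :
    ‖P D B ((ContinuousLinearMap.adjoint A) (A (P D B z))) - P D B z‖ ≤ δ * ‖z‖ := by
  classical
  set S := colSpan D B with hS
  -- quadratic RIP bound on S
  have hQ : ∀ y ∈ S, |‖A y‖ ^ 2 - ‖y‖ ^ 2| ≤ δ * ‖y‖ ^ 2 := by
    intro y hy
    obtain ⟨α, hsupp, rfl⟩ := colSpan_rep D B hy
    have hs : sparse k α := by
      unfold sparse
      calc (Finset.univ.filter fun i => α i ≠ 0).card ≤ B.card := by
            apply Finset.card_le_card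
            intro i hi
            simp only [Finset.mem_filter] at hi
            by_contra h
            exact hi.2 (hsupp i h)
        _ ≤ k := hB
    obtain ⟨h1, h2⟩ := hA α hs
    rw [abs_le]
    constructor <;> nlinarith
  -- polarization bound
  have hRe : ∀ u ∈ S, ∀ v ∈ S,
      RCLike.re (⟪A u, A v⟫_ℂ - ⟪u, v⟫_ℂ) ≤ δ * (‖u‖ ^ 2 + ‖v‖ ^ 2) / 2 := by
    intro u hu v hv
    have e1 := hQ (u + v) (S.add_mem hu hv)
    have e2 := hQ (u - v) (S.sub_mem hu hv)
    have ha1 : ‖A (u + v)‖ ^ 2 = ‖A u‖ ^ 2 + 2 * RCLike.re ⟪A u, A v⟫_ℂ + ‖A v‖ ^ 2 := by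
      rw [map_add]; exact norm_add_sq (𝕜 := ℂ) _ _
    have ha2 : ‖A (u - v)‖ ^ 2 = ‖A u‖ ^ 2 - 2 * RCLike.re ⟪A u, A v⟫_ℂ + ‖A v‖ ^ 2 := by
      rw [map_sub]; exact norm_sub_sq (𝕜 := ℂ) _ _
    have hb1 : ‖u + v‖ ^ 2 = ‖u‖ ^ 2 + 2 * RCLike.re ⟪u, v⟫_ℂ + ‖v‖ ^ 2 := norm_add_sq (𝕜 := ℂ) _ _
    have hb2 : ‖u - v‖ ^ 2 = ‖u‖ ^ 2 - 2 * RCLike.re ⟪u, v⟫_ℂ + ‖v‖ ^ 2 := norm_sub_sq (𝕜 := ℂ) _ _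
    rw [abs_le] at e1 e2
    have hre : RCLike.re (⟪A u, A v⟫_ℂ - ⟪u, v⟫_ℂ)
        = RCLike.re ⟪A u, A v⟫_ℂ - RCLike.re ⟪u, v⟫_ℂ := map_sub _ _ _
    nlinarith [e1.1, e1.2, e2.1, e2.2, sq_nonneg (‖u‖ - ‖v‖), sq_nonneg (‖u‖ + ‖v‖)]
  set x : Vec n := P D B z with hx
  have hxS : x ∈ S := (S.orthogonalProjectionOnto z).2
  have hxz : ‖x‖ ≤ ‖z‖ := by
    have := Submodule.orthogonalProjectionOnto_norm_le S
    calc ‖x‖ = ‖S.orthogonalProjectionOnto z‖ := rfl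
      _ ≤ ‖S.orthogonalProjectionOnto‖ * ‖z‖ := (S.orthogonalProjectionOnto).le_opNorm z
      _ ≤ 1 * ‖z‖ := by gcongr
      _ = ‖z‖ := one_mul _
  set u : Vec n := (ContinuousLinearMap.adjoint A) (A x) with hu
  set w : Vec n := P D B u - x with hw
  have hwS : w ∈ S := S.sub_mem (S.orthogonalProjectionOnto u).2 hxS
  -- key identity: ⟪w, w⟫ = ⟪A x, A w⟫ - ⟪x, w⟫
  have hid : (⟪w, w⟫_ℂ : ℂ) = ⟪A x, A w⟫_ℂ - ⟪x, w⟫_ℂ := by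
    have h1 : ⟪u - P D B u, w⟫_ℂ = 0 := S.starProjection_inner_eq_zero u w hwS
    have h2 : ⟪P D B u, w⟫_ℂ = ⟪u, w⟫_ℂ := by
      have h1' : ⟪u, w⟫_ℂ - ⟪P D B u, w⟫_ℂ = 0 := by rw [← inner_sub_left]; exact h1
      exact (sub_eq_zero.mp h1').symm
    have h3 : ⟪u, w⟫_ℂ = ⟪A x, A w⟫_ℂ := ContinuousLinearMap.adjoint_inner_left A w (A x)
    calc (⟪w, w⟫_ℂ : ℂ) = ⟪P D B u - x, w⟫_ℂ := rfl
      _ = ⟪P D B u, w⟫_ℂ - ⟪x, w⟫_ℂ := inner_sub_left _ _ _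
      _ = ⟪A x, A w⟫_ℂ - ⟪x, w⟫_ℂ := by rw [h2, h3]
  by_cases hw0 : w = 0
  · rw [hw0]
    simp only [norm_zero]
    positivity
  · have hwpos : (0 : ℝ) < ‖w‖ := norm_pos_iff.mpr hw0
    set t : ℝ := ‖x‖ / ‖w‖ with ht
    have ht0 : 0 ≤ t := div_nonneg (norm_nonneg _) (norm_nonneg _)
    have htw : ‖(t : ℂ) • w‖ = ‖x‖ := by
      rw [norm_smul]
      simp [ht, abs_of_nonneg ht0, div_mul_cancel₀, hwpos.ne']
    have hkey := hRe x hxS ((t : ℂ) • w) (S.smul_mem _ hwS)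
    rw [htw] at hkey
    have hlhs : RCLike.re (⟪A x, A ((t : ℂ) • w)⟫_ℂ - ⟪x, (t : ℂ) • w⟫_ℂ)
        = t * ‖w‖ ^ 2 := by
      rw [map_smul, inner_smul_right, inner_smul_right, ← mul_sub, ← hid]
      have hwr : (⟪w, w⟫_ℂ : ℂ) = ((‖w‖ ^ 2 : ℝ) : ℂ) := by
        rw [inner_self_eq_norm_sq_to_K]; norm_cast
      rw [hwr]
      have : ((t : ℂ) * ((‖w‖ ^ 2 : ℝ) : ℂ)) = (((t * ‖w‖ ^ 2 : ℝ)) : ℂ) := by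
        push_cast; ring
      rw [this]
      exact RCLike.ofReal_re _
    rw [hlhs] at hkey
    -- hkey : t * ‖w‖ ^ 2 ≤ δ * (‖x‖ ^ 2 + ‖x‖ ^ 2) / 2
    have htw2 : t * ‖w‖ ^ 2 = ‖x‖ * ‖w‖ := by
      field_simp [ht]
      rw [ht, div_mul_cancel₀ _ hwpos.ne']
    rw [htw2] at hkey
    have hxw : ‖x‖ * ‖w‖ ≤ δ * ‖x‖ ^ 2 := by linarith
    by_cases hx0 : ‖x‖ = 0
    · exfalso
      have : x = 0 := norm_eq_zero.mp hx0
      apply hw0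
      rw [hw, hu, this]
      simp only [map_zero, sub_zero]
      show ((S.orthogonalProjectionOnto (0 : Vec n) : Vec n)) = 0
      rw [map_zero]
      rfl
    · have hxpos : 0 < ‖x‖ := lt_of_le_of_ne (norm_nonneg _) (Ne.symm hx0)
      have : ‖w‖ ≤ δ * ‖x‖ := by
        rw [pow_two] at hxw
        nlinarith
      calc ‖w‖ ≤ δ * ‖x‖ := this
        _ ≤ δ * ‖z‖ := by gcongr
end
end

section
/- Suppose the m×n matrix A satisfies ‖Ax‖ ≤ √(1+δ_k)‖x‖ for every k-sparse vector x ∈ ℂ^n. Then for every z ∈ ℂ^n, ‖Az‖ ≤ √(1+δ_k)(‖z‖₂ + ‖z‖₁/√k). -/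
noncomputable section

open Classical

/-- top-k selection -/
lemma exists_top {n : ℕ} (s : Finset (Fin n)) (f : Fin n → ℝ) :
    ∀ m, m ≤ s.card → ∃ T ⊆ s, T.card = m ∧ ∀ i ∈ T, ∀ j ∈ s, j ∉ T → f j ≤ f i := by
  intro m
  induction m with
  | zero => exact fun _ => ⟨∅, by simp⟩
  | succ m ih =>
    intro hm
    obtain ⟨T, hTs, hTc, hdom⟩ := ih (le_of_lt (Nat.lt_of_succ_le hm))
    have hne : (s \ T).Nonempty := by
      rw [← Finset.card_pos, Finset.card_sdiff_of_subset hTs, hTc]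
      omega
    obtain ⟨a, ha, hmax⟩ := Finset.exists_max_image (s \ T) f hne
    have haT : a ∉ T := (Finset.mem_sdiff.1 ha).2
    refine ⟨insert a T, ?_, ?_, ?_⟩
    · exact Finset.insert_subset (Finset.mem_sdiff.1 ha).1 hTs
    · rw [Finset.card_insert_of_notMem haT, hTc]
    · intro i hi j hj hjT
      have hjT' : j ∉ T := fun h => hjT (Finset.mem_insert_of_mem h)
      rcases Finset.mem_insert.1 hi with rfl | hi
      · exact hmax j (Finset.mem_sdiff.2 ⟨hj, hjT'⟩)
      · exact hdom i hi j hj hjT'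

lemma norm_le_sqrt_mul {n k : ℕ} (z : Vec n) (M : ℝ) (hM : 0 ≤ M)
    (hs : (Finset.univ.filter fun i => z i ≠ 0).card ≤ k)
    (hbd : ∀ i, ‖z i‖ ≤ M) : ‖z‖ ≤ Real.sqrt k * M := by
  rw [EuclideanSpace.norm_eq]
  have h1 : ∑ i, ‖z i‖ ^ 2 ≤ (k : ℝ) * M ^ 2 := by
    have h2 : ∑ i, ‖z i‖ ^ 2 = ∑ i ∈ Finset.univ.filter fun i => z i ≠ 0, ‖z i‖ ^ 2 := by
      symm
      apply Finset.sum_filter_of_ne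
      intro x _ hx h
      simp [h] at hx
    rw [h2]
    calc ∑ i ∈ Finset.univ.filter fun i => z i ≠ 0, ‖z i‖ ^ 2
        ≤ (Finset.univ.filter fun i => z i ≠ 0).card • M ^ 2 :=
          Finset.sum_le_card_nsmul _ _ _ fun x _ => pow_le_pow_left₀ (norm_nonneg _) (hbd x) 2
      _ ≤ (k : ℝ) * M ^ 2 := by
          rw [nsmul_eq_mul]
          exact mul_le_mul_of_nonneg_right (by exact_mod_cast hs) (sq_nonneg M)
  calc Real.sqrt (∑ i, ‖z i‖ ^ 2) ≤ Real.sqrt ((k : ℝ) * M ^ 2) := Real.sqrt_le_sqrt h1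
    _ = Real.sqrt k * M := by
        rw [Real.sqrt_mul (Nat.cast_nonneg k), Real.sqrt_sq hM]

lemma norm_le_norm_entrywise {n : ℕ} (y z : Vec n) (h : ∀ i, ‖y i‖ ≤ ‖z i‖) : ‖y‖ ≤ ‖z‖ := by
  rw [EuclideanSpace.norm_eq, EuclideanSpace.norm_eq]
  apply Real.sqrt_le_sqrt
  exact Finset.sum_le_sum fun i _ => pow_le_pow_left₀ (norm_nonneg _) (h i) 2

lemma key {m n k : ℕ} (hk : 0 < k) (A : Vec n →L[ℂ] Vec m) (δ : ℝ)
    (hA : ∀ x : Vec n, sparse k x → ‖A x‖ ≤ Real.sqrt (1 + δ) * ‖x‖) :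
    ∀ N : ℕ, ∀ z : Vec n, ∀ M : ℝ, 0 ≤ M →
      (Finset.univ.filter fun i => z i ≠ 0).card ≤ N →
      (∀ i, ‖z i‖ ≤ M) →
      ‖A z‖ ≤ Real.sqrt (1 + δ) * (Real.sqrt k * M + (∑ i, ‖z i‖) / Real.sqrt k) := by
  have hs0 : (0 : ℝ) ≤ Real.sqrt (1 + δ) := Real.sqrt_nonneg _
  have hk0 : (0 : ℝ) < Real.sqrt k := Real.sqrt_pos.2 (by exact_mod_cast hk)
  have hksq : Real.sqrt k * Real.sqrt k = (k : ℝ) := Real.mul_self_sqrt (Nat.cast_nonneg k)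
  intro N
  induction N using Nat.strong_induction_on with
  | _ N ih =>
    intro z M hM hsupp hbd
    by_cases hbase : (Finset.univ.filter fun i => z i ≠ 0).card ≤ k
    · have h1 : ‖A z‖ ≤ Real.sqrt (1 + δ) * ‖z‖ := hA z hbase
      have h2 : ‖z‖ ≤ Real.sqrt k * M := norm_le_sqrt_mul z M hM hbase hbd
      have h3 : 0 ≤ (∑ i, ‖z i‖) / Real.sqrt k :=
        div_nonneg (Finset.sum_nonneg fun i _ => norm_nonneg _) hk0.le
      nlinarith
    · push_neg at hbase
      set S := Finset.univ.filter fun i => z i ≠ 0 with hS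
      obtain ⟨T, hTs, hTc, hdom⟩ := exists_top S (fun i => ‖z i‖) k hbase.le
      set zT : Vec n := (WithLp.toLp 2 (fun i => if i ∈ T then z i else 0) : EuclideanSpace ℂ (Fin n)) with hzT
      set w : Vec n := z - zT with hw
      have hwapp : ∀ i, w i = z i - zT i := fun i => rfl
      have hwT : ∀ i ∈ T, w i = 0 := by
        intro i hi; rw [hwapp]; simp [hzT, hi]
      have hwnT : ∀ i, i ∉ T → w i = z i := by
        intro i hi; rw [hwapp]; simp [hzT, hi]
      have hdom' : ∀ i ∈ T, ∀ j, j ∉ T → ‖z j‖ ≤ ‖z i‖ := by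
        intro i hi j hj
        by_cases hz : z j = 0
        · simp [hz]
        · exact hdom i hi j (Finset.mem_filter.2 ⟨Finset.mem_univ _, hz⟩) hj
      set M' : ℝ := (∑ i ∈ T, ‖z i‖) / k with hM'
      have hST0 : 0 ≤ ∑ i ∈ T, ‖z i‖ := Finset.sum_nonneg fun i _ => norm_nonneg _
      have hM'0 : 0 ≤ M' := div_nonneg hST0 (Nat.cast_nonneg k)
      have hbdw : ∀ i, ‖w i‖ ≤ M' := by
        intro i
        by_cases hi : i ∈ T
        · rw [hwT i hi]; simpa using hM'0
        · rw [hwnT i hi, hM', le_div_iff₀ (by exact_mod_cast hk)]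
          calc ‖z i‖ * k = ∑ _j ∈ T, ‖z i‖ := by
                rw [Finset.sum_const, hTc, nsmul_eq_mul]; ring
            _ ≤ ∑ j ∈ T, ‖z j‖ := Finset.sum_le_sum fun j hj => hdom' j hj i hi
      have hsw : (Finset.univ.filter fun i => w i ≠ 0) ⊆ S \ T := by
        intro i hi
        rw [Finset.mem_filter] at hi
        rw [Finset.mem_sdiff]
        constructor
        · by_contra hz
          have hz0 : z i = 0 := by
            by_contra hz'
            exact hz (Finset.mem_filter.2 ⟨Finset.mem_univ _, hz'⟩)
          apply hi.2
          by_cases hiT : i ∈ T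
          · exact hwT i hiT
          · rw [hwnT i hiT, hz0]
        · intro hiT
          exact hi.2 (hwT i hiT)
      have hswc : (Finset.univ.filter fun i => w i ≠ 0).card < N := by
        have h1 := Finset.card_le_card hsw
        rw [Finset.card_sdiff_of_subset hTs, hTc] at h1
        omega
      have hsT : sparse k zT := by
        unfold sparse
        refine le_trans (Finset.card_le_card ?_) (le_of_eq hTc)
        intro i hi
        rw [Finset.mem_filter] at hi
        by_contra hiT
        exact hi.2 (by simp [hzT, hiT])
      have hbzT : ∀ i, ‖zT i‖ ≤ M := by
        intro i
        by_cases hi : i ∈ T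
        · simpa [hzT, hi] using hbd i
        · simpa [hzT, hi] using hM
      have hnzT : ‖zT‖ ≤ Real.sqrt k * M := norm_le_sqrt_mul zT M hM hsT hbzT
      have hAzT : ‖A zT‖ ≤ Real.sqrt (1 + δ) * (Real.sqrt k * M) :=
        le_trans (hA zT hsT) (mul_le_mul_of_nonneg_left hnzT hs0)
      have hAw : ‖A w‖ ≤ Real.sqrt (1 + δ) * (Real.sqrt k * M' + (∑ i, ‖w i‖) / Real.sqrt k) :=
        ih _ hswc w M' hM'0 le_rfl hbdw
      -- sums
      have hsum : ∑ i ∈ T, ‖z i‖ + ∑ i, ‖w i‖ = ∑ i, ‖z i‖ := by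
        have e1 : ∑ i ∈ T, ‖w i‖ + ∑ i ∈ Tᶜ, ‖w i‖ = ∑ i, ‖w i‖ :=
          Finset.sum_add_sum_compl T _
        have e2 : ∑ i ∈ T, ‖w i‖ = 0 :=
          Finset.sum_eq_zero fun i hi => by rw [hwT i hi, norm_zero]
        have e3 : ∑ i ∈ Tᶜ, ‖w i‖ = ∑ i ∈ Tᶜ, ‖z i‖ :=
          Finset.sum_congr rfl fun i hi => by rw [hwnT i (Finset.mem_compl.1 hi)]
        have e4 : ∑ i ∈ T, ‖z i‖ + ∑ i ∈ Tᶜ, ‖z i‖ = ∑ i, ‖z i‖ :=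
          Finset.sum_add_sum_compl T _
        rw [← e1, e2, e3]
        linarith
      have hM'eq : Real.sqrt k * M' = (∑ i ∈ T, ‖z i‖) / Real.sqrt k := by
        rw [hM']
        field_simp
        linear_combination (∑ i ∈ T, ‖z i‖) * hksq
      have hcomb : Real.sqrt k * M' + (∑ i, ‖w i‖) / Real.sqrt k = (∑ i, ‖z i‖) / Real.sqrt k := by
        rw [hM'eq, ← add_div, hsum]
      have hAz : ‖A z‖ ≤ ‖A zT‖ + ‖A w‖ := by
        have hzeq : z = zT + w := by rw [hw]; abel
        calc ‖A z‖ = ‖A zT + A w‖ := by rw [hzeq, map_add]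
          _ ≤ ‖A zT‖ + ‖A w‖ := norm_add_le _ _
      calc ‖A z‖ ≤ ‖A zT‖ + ‖A w‖ := hAz
        _ ≤ Real.sqrt (1 + δ) * (Real.sqrt k * M)
            + Real.sqrt (1 + δ) * (Real.sqrt k * M' + (∑ i, ‖w i‖) / Real.sqrt k) := by
            linarith
        _ = Real.sqrt (1 + δ) * (Real.sqrt k * M + (∑ i, ‖z i‖) / Real.sqrt k) := by
            rw [hcomb]; ring

lemma split_bound {m n k : ℕ} (hk : 0 < k) (A : Vec n →L[ℂ] Vec m) (δ : ℝ)
    (hA : ∀ x : Vec n, sparse k x → ‖A x‖ ≤ Real.sqrt (1 + δ) * ‖x‖) (z : Vec n) :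
    ∃ y : Vec n, (∀ i, ‖y i‖ ≤ ‖z i‖) ∧
      ‖A z‖ ≤ Real.sqrt (1 + δ) * ‖y‖ + Real.sqrt (1 + δ) * ((∑ i, ‖z i‖) / Real.sqrt k) := by
  have hs0 : (0 : ℝ) ≤ Real.sqrt (1 + δ) := Real.sqrt_nonneg _
  have hk0 : (0 : ℝ) < Real.sqrt k := Real.sqrt_pos.2 (by exact_mod_cast hk)
  have hksq : Real.sqrt k * Real.sqrt k = (k : ℝ) := Real.mul_self_sqrt (Nat.cast_nonneg k)
  by_cases hbase : (Finset.univ.filter fun i => z i ≠ 0).card ≤ k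
  · refine ⟨z, fun i => le_rfl, ?_⟩
    have h1 : ‖A z‖ ≤ Real.sqrt (1 + δ) * ‖z‖ := hA z hbase
    have h3 : 0 ≤ (∑ i, ‖z i‖) / Real.sqrt k :=
      div_nonneg (Finset.sum_nonneg fun i _ => norm_nonneg _) hk0.le
    nlinarith
  · push_neg at hbase
    set S := Finset.univ.filter fun i => z i ≠ 0 with hS
    obtain ⟨T, hTs, hTc, hdom⟩ := exists_top S (fun i => ‖z i‖) k hbase.le
    set zT : Vec n := (WithLp.toLp 2 (fun i => if i ∈ T then z i else 0) : EuclideanSpace ℂ (Fin n)) with hzT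
    set w : Vec n := z - zT with hw
    have hwapp : ∀ i, w i = z i - zT i := fun i => rfl
    have hwT : ∀ i ∈ T, w i = 0 := by
      intro i hi; rw [hwapp]; simp [hzT, hi]
    have hwnT : ∀ i, i ∉ T → w i = z i := by
      intro i hi; rw [hwapp]; simp [hzT, hi]
    have hdom' : ∀ i ∈ T, ∀ j, j ∉ T → ‖z j‖ ≤ ‖z i‖ := by
      intro i hi j hj
      by_cases hz : z j = 0
      · simp [hz]
      · exact hdom i hi j (Finset.mem_filter.2 ⟨Finset.mem_univ _, hz⟩) hj
    set M' : ℝ := (∑ i ∈ T, ‖z i‖) / k with hM'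
    have hST0 : 0 ≤ ∑ i ∈ T, ‖z i‖ := Finset.sum_nonneg fun i _ => norm_nonneg _
    have hM'0 : 0 ≤ M' := div_nonneg hST0 (Nat.cast_nonneg k)
    have hbdw : ∀ i, ‖w i‖ ≤ M' := by
      intro i
      by_cases hi : i ∈ T
      · rw [hwT i hi]; simpa using hM'0
      · rw [hwnT i hi, hM', le_div_iff₀ (by exact_mod_cast hk)]
        calc ‖z i‖ * k = ∑ _j ∈ T, ‖z i‖ := by
              rw [Finset.sum_const, hTc, nsmul_eq_mul]; ring
          _ ≤ ∑ j ∈ T, ‖z j‖ := Finset.sum_le_sum fun j hj => hdom' j hj i hi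
    have hsT : sparse k zT := by
      unfold sparse
      refine le_trans (Finset.card_le_card ?_) (le_of_eq hTc)
      intro i hi
      rw [Finset.mem_filter] at hi
      by_contra hiT
      exact hi.2 (by simp [hzT, hiT])
    have hAw : ‖A w‖ ≤ Real.sqrt (1 + δ) * (Real.sqrt k * M' + (∑ i, ‖w i‖) / Real.sqrt k) :=
      key hk A δ hA _ w M' hM'0 le_rfl hbdw
    have hsum : ∑ i ∈ T, ‖z i‖ + ∑ i, ‖w i‖ = ∑ i, ‖z i‖ := by
      have e1 : ∑ i ∈ T, ‖w i‖ + ∑ i ∈ Tᶜ, ‖w i‖ = ∑ i, ‖w i‖ :=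
        Finset.sum_add_sum_compl T _
      have e2 : ∑ i ∈ T, ‖w i‖ = 0 :=
        Finset.sum_eq_zero fun i hi => by rw [hwT i hi, norm_zero]
      have e3 : ∑ i ∈ Tᶜ, ‖w i‖ = ∑ i ∈ Tᶜ, ‖z i‖ :=
        Finset.sum_congr rfl fun i hi => by rw [hwnT i (Finset.mem_compl.1 hi)]
      have e4 : ∑ i ∈ T, ‖z i‖ + ∑ i ∈ Tᶜ, ‖z i‖ = ∑ i, ‖z i‖ :=
        Finset.sum_add_sum_compl T _
      rw [← e1, e2, e3]
      linarith
    have hM'eq : Real.sqrt k * M' = (∑ i ∈ T, ‖z i‖) / Real.sqrt k := by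
      rw [hM']
      field_simp
      linear_combination (∑ i ∈ T, ‖z i‖) * hksq
    have hcomb : Real.sqrt k * M' + (∑ i, ‖w i‖) / Real.sqrt k = (∑ i, ‖z i‖) / Real.sqrt k := by
      rw [hM'eq, ← add_div, hsum]
    have hAz : ‖A z‖ ≤ ‖A zT‖ + ‖A w‖ := by
      have hzeq : z = zT + w := by rw [hw]; abel
      calc ‖A z‖ = ‖A zT + A w‖ := by rw [hzeq, map_add]
        _ ≤ ‖A zT‖ + ‖A w‖ := norm_add_le _ _
    refine ⟨zT, ?_, ?_⟩
    · intro i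
      by_cases hi : i ∈ T
      · simp [hzT, hi]
      · simp [hzT, hi]
    · calc ‖A z‖ ≤ ‖A zT‖ + ‖A w‖ := hAz
        _ ≤ Real.sqrt (1 + δ) * ‖zT‖
            + Real.sqrt (1 + δ) * (Real.sqrt k * M' + (∑ i, ‖w i‖) / Real.sqrt k) := by
            have := hA zT hsT
            linarith
        _ = Real.sqrt (1 + δ) * ‖zT‖ + Real.sqrt (1 + δ) * ((∑ i, ‖z i‖) / Real.sqrt k) := by
            rw [hcomb]


theorem stmt3 {m n k : ℕ} (hk : 0 < k) (A : Vec n →L[ℂ] Vec m) (δ : ℝ) (hδ0 : 0 < δ) (hδ1 : δ < 1)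
    (hA : ∀ x : Vec n, sparse k x → ‖A x‖ ≤ Real.sqrt (1 + δ) * ‖x‖) (z : Vec n) :
    ‖A z‖ ≤ Real.sqrt (1 + δ) * (‖z‖ + (∑ i, ‖z i‖) / Real.sqrt k) := by
  obtain ⟨y, hy, hbound⟩ := split_bound hk A δ hA z
  have h1 : ‖y‖ ≤ ‖z‖ := norm_le_norm_entrywise y z hy
  have hs0 : (0 : ℝ) ≤ Real.sqrt (1 + δ) := Real.sqrt_nonneg _
  nlinarith
end
end
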